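/- For every domain u ∈ D, the unwinding relation ∼ᵘⁿʷ_u equals the relation ∼^□_u defined by α ∼^□_u β iff ta^□_u(α) = ta^□_u(β), where ta^□ is the prohibitive purge function interpreted over the Kripke structure with equivalence relations {∼ᵘⁿʷ_u}. -/
import Mathlib


open Classical

/-- Binary trees over actions, values of the `ta` purge functions. -/
inductive TATree (A : Type) : Type where
  | eps : TATree A
  | node : TATree A → TATree A → A → TATree A

/-- Run a deterministic system along a trace (newest action at the head of the list). -/
def runL {S A : Type} (step : S → A → S) (s0 : S) : List A → S
  | [] => s0
  | a :: α => step (runL step s0 α) a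

/-- The permissive purge function `ta^◇` for a dynamic policy `P`. -/
noncomputable def taD {D A : Type} (dm : A → D) (P : List A → D → D → Prop) :
    List A → D → TATree A
  | [], _ => TATree.eps
  | a :: α, u =>
    if P α (dm a) u then TATree.node (taD dm P α u) (taD dm P α (dm a)) a
    else taD dm P α u

/-- The unwinding relations: smallest family of equivalence relations on traces
satisfying WSC and DLR with respect to the dynamic policy `P`. -/
inductive Unw {D A : Type} (dm : A → D) (P : List A → D → D → Prop) :
    D → List A → List A → Prop where
  | refl (u : D) (α : List A) : Unw dm P u α α
  | symm {u : D} {α β : List A} : Unw dm P u α β → Unw dm P u β α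
  | trans {u : D} {α β γ : List A} : Unw dm P u α β → Unw dm P u β γ → Unw dm P u α γ
  | dlr (u : D) (α : List A) (a : A) : ¬ P α (dm a) u → Unw dm P u (a :: α) α
  | wsc (u : D) {α β : List A} (a : A) :
      Unw dm P u α β → Unw dm P (dm a) α β → Unw dm P u (a :: α) (a :: β)

/-- The prohibitive purge function `ta^□`, whose condition is distributed knowledge
of the policy edge, interpreted over the Kripke structure given by the unwinding relations. -/
noncomputable def taB {D A : Type} (dm : A → D) (P : List A → D → D → Prop) :
    List A → D → TATree A
  | [], _ => TATree.eps
  | a :: α, u =>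
    if (∀ β, Unw dm P u α β → Unw dm P (dm a) α β → P β (dm a) u) then
      TATree.node (taB dm P α u) (taB dm P α (dm a)) a
    else taB dm P α u

lemma taB_sound {D A : Type} (dm : A → D) (P : List A → D → D → Prop) :
    ∀ {u : D} {α β : List A}, Unw dm P u α β → taB dm P α u = taB dm P β u := by
  intro u α β h
  induction h with
  | refl u α => rfl
  | symm _ ih => exact ih.symm
  | trans _ _ ih1 ih2 => exact ih1.trans ih2
  | dlr u α a hna =>
      have hnc : ¬ (∀ γ, Unw dm P u α γ → Unw dm P (dm a) α γ → P γ (dm a) u) :=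
        fun hc => hna (hc α (Unw.refl _ _) (Unw.refl _ _))
      simp only [taB, if_neg hnc]
  | @wsc u α β a h1 h2 ih1 ih2 =>
      have hcond : (∀ γ, Unw dm P u α γ → Unw dm P (dm a) α γ → P γ (dm a) u) ↔
          (∀ γ, Unw dm P u β γ → Unw dm P (dm a) β γ → P γ (dm a) u) := by
        constructor
        · intro hc γ hg1 hg2; exact hc γ (h1.trans hg1) (h2.trans hg2)
        · intro hc γ hg1 hg2; exact hc γ (h1.symm.trans hg1) (h2.symm.trans hg2)
      by_cases hc : ∀ γ, Unw dm P u α γ → Unw dm P (dm a) α γ → P γ (dm a) u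
      · simp only [taB, if_pos hc, if_pos (hcond.mp hc), ih1, ih2]
      · simp only [taB, if_neg hc, if_neg (fun h => hc (hcond.mpr h)), ih1]

lemma step_neg {D A : Type} (dm : A → D) (P : List A → D → D → Prop)
    {u : D} {α : List A} {a : A}
    (h : ¬ ∀ γ, Unw dm P u α γ → Unw dm P (dm a) α γ → P γ (dm a) u) :
    Unw dm P u (a :: α) α := by
  push_neg at h
  obtain ⟨γ, hg1, hg2, hnp⟩ := h
  exact ((Unw.wsc u a hg1 hg2).trans (Unw.dlr u γ a hnp)).trans hg1.symm

lemma taB_complete {D A : Type} (dm : A → D) (P : List A → D → D → Prop) :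
    ∀ n (u : D) (α β : List A), α.length + β.length ≤ n →
      taB dm P α u = taB dm P β u → Unw dm P u α β := by
  intro n
  induction n with
  | zero =>
    intro u α β hlen _
    have hα : α = [] := List.length_eq_zero_iff.mp (by omega)
    have hβ : β = [] := List.length_eq_zero_iff.mp (by omega)
    subst hα; subst hβ; exact Unw.refl _ _
  | succ n ih =>
    intro u α β hlen h
    match α, β with
    | [], [] => exact Unw.refl _ _
    | [], b :: β' =>
      by_cases hc : ∀ γ, Unw dm P u β' γ → Unw dm P (dm b) β' γ → P γ (dm b) u
      · simp only [taB, if_pos hc] at h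
        exact absurd h (by simp)
      · have hs := step_neg dm P hc
        have hr := ih u [] β' (by simp at hlen ⊢; omega) (h.trans (taB_sound dm P hs))
        exact hr.trans hs.symm
    | a :: α', β =>
      by_cases hc : ∀ γ, Unw dm P u α' γ → Unw dm P (dm a) α' γ → P γ (dm a) u
      · cases β with
        | nil =>
          simp only [taB, if_pos hc] at h
          exact absurd h (by simp)
        | cons b β' =>
          by_cases hc2 : ∀ γ, Unw dm P u β' γ → Unw dm P (dm b) β' γ → P γ (dm b) u
          · simp only [taB, if_pos hc, if_pos hc2] at h
            injection h with h1 h2 h3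
            subst h3
            have u1 := ih u α' β' (by simp at hlen ⊢; omega) h1
            have u2 := ih (dm a) α' β' (by simp at hlen ⊢; omega) h2
            exact Unw.wsc u a u1 u2
          · have hs := step_neg dm P hc2
            have hr := ih u (a :: α') β' (by simp at hlen ⊢; omega)
              (h.trans (taB_sound dm P hs))
            exact hr.trans hs.symm
      · have hs := step_neg dm P hc
        have hr := ih u α' β (by simp at hlen ⊢; omega)
          ((taB_sound dm P hs).symm.trans h)
        exact hs.trans hr

/-- the unwinding relation `∼ᵘⁿʷ_u` coincides with the kernel of `ta^□_u`. -/
theorem statement_3 {D A : Type} (dm : A → D) (P : List A → D → D → Prop)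
    (hrefl : ∀ α u, P α u u) :
    ∀ u (α β : List A), Unw dm P u α β ↔ taB dm P α u = taB dm P β u := by
  intro u α β
  constructor
  · exact taB_sound dm P
  · intro h
    exact taB_complete dm P (α.length + β.length) u α β le_rfl h
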